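/- Let f: ℝⁿ → ℝ be a C² function with f_{x₁ x₂} ≤ 0 everywhere, and suppose f is symmetric in its arguments. Then for any real numbers a > b, f(a, b, …, b) + f(b, a, …, a) ≥ f(a, a, …, a) + f(b, b, …, b). -/

import Mathlib

/-- Second partial derivative `f_{x_i x_j}` of a function on `Fin n → ℝ`. -/
noncomputable def secondPartial {n : ℕ} (f : (Fin n → ℝ) → ℝ) (i j : Fin n)
    (x : Fin n → ℝ) : ℝ :=
  fderiv ℝ (fun y => fderiv ℝ f y (Pi.single i 1)) x (Pi.single j 1)

noncomputable def permCLM {n : ℕ} (σ : Equiv.Perm (Fin n)) : (Fin n → ℝ) →L[ℝ] (Fin n → ℝ) :=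
  ContinuousLinearMap.pi fun i => ContinuousLinearMap.proj (σ i)

lemma permCLM_apply {n : ℕ} (σ : Equiv.Perm (Fin n)) (x : Fin n → ℝ) :
    permCLM σ x = x ∘ σ := rfl

lemma permCLM_single {n : ℕ} (σ : Equiv.Perm (Fin n)) (i : Fin n) :
    permCLM σ (Pi.single i 1) = Pi.single (σ⁻¹ i) (1 : ℝ) := by
  funext k
  simp only [permCLM_apply, Function.comp_apply, Pi.single_apply]
  by_cases h : k = σ⁻¹ i
  · subst h; simp
  · have h2 : σ k ≠ i := fun hc => h (by rw [← hc]; simp)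
    simpa [h2] using h

lemma secondPartial_perm {n : ℕ} (f : (Fin n → ℝ) → ℝ) (hf : ContDiff ℝ 2 f)
    (σ : Equiv.Perm (Fin n)) (hσ : ∀ x : Fin n → ℝ, f (x ∘ σ) = f x)
    (i j : Fin n) (x : Fin n → ℝ) :
    secondPartial f i j x = secondPartial f (σ⁻¹ i) (σ⁻¹ j) (x ∘ σ) := by
  set L := permCLM σ with hL
  have hfd : Differentiable ℝ f := hf.differentiable two_ne_zero
  have hF : Differentiable ℝ (fderiv ℝ f) :=
    (hf.fderiv_right (m := 1) (by norm_num)).differentiable one_ne_zero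
  have hD : ∀ k : Fin n, Differentiable ℝ (fun y => fderiv ℝ f y (Pi.single k 1)) := fun k =>
    hF.clm_apply (differentiable_const _)
  have hcomp : ∀ y v, fderiv ℝ f y v = fderiv ℝ f (L y) (L v) := by
    intro y v
    have h1 : f ∘ L = f := funext fun z => hσ z
    have h2 : fderiv ℝ (f ∘ L) y = (fderiv ℝ f (L y)).comp L := by
      rw [fderiv_comp y (hfd (L y)) L.differentiableAt, L.fderiv]
    have h3 : fderiv ℝ f y v = fderiv ℝ (f ∘ L) y v := by rw [h1]
    rw [h3, h2]; rfl
  have h1 : (fun y => fderiv ℝ f y (Pi.single i 1)) =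
      (fun z => fderiv ℝ f z (Pi.single (σ⁻¹ i) 1)) ∘ L := by
    funext y
    rw [Function.comp_apply, hcomp y, permCLM_single]
  unfold secondPartial
  rw [h1, fderiv_comp x ((hD _) (L x)) L.differentiableAt, L.fderiv,
    ContinuousLinearMap.comp_apply, permCLM_single]
  rfl

lemma second_fderiv_apply {n : ℕ} (f : (Fin n → ℝ) → ℝ)
    (hF : Differentiable ℝ (fderiv ℝ f)) (x u w : Fin n → ℝ) :
    fderiv ℝ (fun y => fderiv ℝ f y w) x u = fderiv ℝ (fderiv ℝ f) x u w := by
  have h : (fun y => fderiv ℝ f y w) = (ContinuousLinearMap.apply ℝ ℝ w) ∘ (fderiv ℝ f) := rfl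
  rw [h, fderiv_comp x (ContinuousLinearMap.apply ℝ ℝ w).differentiableAt (hF x),
    ContinuousLinearMap.fderiv]
  rfl

theorem stmt1 {n : ℕ} (hn : 2 ≤ n) (f : (Fin n → ℝ) → ℝ)
    (hf : ContDiff ℝ 2 f)
    (hsym : ∀ (σ : Equiv.Perm (Fin n)) (x : Fin n → ℝ), f (x ∘ σ) = f x)
    (hconc : ∀ x : Fin n → ℝ, secondPartial f ⟨0, by omega⟩ ⟨1, by omega⟩ x ≤ 0)
    (a b : ℝ) (hab : b < a) :
    f (Function.update (fun _ => b) ⟨0, by omega⟩ a)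
      + f (Function.update (fun _ => a) ⟨0, by omega⟩ b)
      ≥ f (fun _ => a) + f (fun _ => b) := by
  set i0 : Fin n := ⟨0, by omega⟩ with hi0
  set i1 : Fin n := ⟨1, by omega⟩ with hi1
  have hne01 : i0 ≠ i1 := by simp [hi0, hi1, Fin.ext_iff]
  have hfd : Differentiable ℝ f := hf.differentiable two_ne_zero
  have hF : Differentiable ℝ (fderiv ℝ f) :=
    (hf.fderiv_right (m := 1) (by norm_num)).differentiable one_ne_zero
  -- all off-diagonal second partials are nonpositive
  have hsp : ∀ i j : Fin n, i ≠ j → ∀ x : Fin n → ℝ, secondPartial f i j x ≤ 0 := by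
    intro i j hij x
    obtain ⟨σ, hσ0, hσ1⟩ : ∃ σ : Equiv.Perm (Fin n), σ i0 = i ∧ σ i1 = j := by
      set τ := Equiv.swap i0 i with hτ
      set j' := τ.symm j with hj'
      have hj'0 : j' ≠ i0 := by
        intro h
        apply hij
        have : j = τ i0 := by rw [← h, hj']; simp
        simpa [hτ, Equiv.swap_apply_left] using this.symm
      refine ⟨τ * Equiv.swap i1 j', ?_, ?_⟩
      · have : Equiv.swap i1 j' i0 = i0 :=
          Equiv.swap_apply_of_ne_of_ne hne01 (Ne.symm hj'0)
        simp [Equiv.Perm.mul_apply, this, hτ, Equiv.swap_apply_left]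
      · simp [Equiv.Perm.mul_apply, Equiv.swap_apply_left, hj']
    have hinv0 : σ⁻¹ i = i0 := by rw [← hσ0]; simp
    have hinv1 : σ⁻¹ j = i1 := by rw [← hσ1]; simp
    calc secondPartial f i j x
        = secondPartial f (σ⁻¹ i) (σ⁻¹ j) (x ∘ σ) :=
          secondPartial_perm f hf σ (hsym σ) i j x
      _ ≤ 0 := by rw [hinv0, hinv1]; exact hconc _
  -- setup
  set E : Fin n → ℝ := Pi.single i0 1 with hE
  set V : Fin n → ℝ := fun i => if i = i0 then 0 else 1 with hV
  set c : ℝ → ℝ → (Fin n → ℝ) := fun s t => s • E + t • V with hc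
  -- key: the mixed derivative in directions E then V is ≤ 0
  have hkey : ∀ x : Fin n → ℝ, fderiv ℝ (fderiv ℝ f) x E V ≤ 0 := by
    intro x
    have hVsum : V = ∑ j ∈ Finset.univ.erase i0, Pi.single j (1:ℝ) := by
      funext i
      rw [Finset.sum_apply]
      by_cases h : i = i0
      · simp [hV, h, Pi.single_apply]
      · rw [hV]
        simp only [h, if_false]
        rw [Finset.sum_eq_single i]
        · simp [Pi.single_apply]
        · intro j _ hji; simp [Pi.single_apply, Ne.symm hji]
        · simp [h]
      
    rw [hVsum, map_sum]
    apply Finset.sum_nonpos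
    intro j hj
    have hji0 : j ≠ i0 := Finset.ne_of_mem_erase hj
    have := hsp j i0 hji0 x
    unfold secondPartial at this
    rwa [second_fderiv_apply f hF x (Pi.single i0 1) (Pi.single j 1)] at this
  -- derivative computations
  have hc_s : ∀ s t : ℝ, HasDerivAt (fun s => c s t) E s := by
    intro s t
    have := (((hasDerivAt_id s).smul_const E).add_const (t • V))
    rw [one_smul] at this
    exact this
  have hc_t : ∀ s t : ℝ, HasDerivAt (fun t => c s t) V t := by
    intro s t
    have := (((hasDerivAt_id t).smul_const V).const_add (s • E))
    rw [one_smul] at this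
    exact this
  -- for fixed t, s ↦ fderiv f (c s t) V is antitone
  have hq : ∀ t : ℝ, Antitone (fun s => fderiv ℝ f (c s t) V) := by
    intro t
    have hd : ∀ s : ℝ, HasDerivAt (fun s => fderiv ℝ f (c s t) V)
        (fderiv ℝ (fderiv ℝ f) (c s t) E V) s := by
      intro s
      have hAF : HasFDerivAt (fun y => fderiv ℝ f y V)
          ((ContinuousLinearMap.apply ℝ ℝ V).comp (fderiv ℝ (fderiv ℝ f) (c s t))) (c s t) :=
        (ContinuousLinearMap.apply ℝ ℝ V).hasFDerivAt.comp _ (hF _).hasFDerivAt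
      have := hAF.comp_hasDerivAt s (hc_s s t)
      exact this
    apply antitone_of_deriv_nonpos
    · exact fun s => (hd s).differentiableAt
    · intro s
      rw [(hd s).deriv]
      exact hkey _
  -- h(t) = f(c a t) - f(c b t) is antitone
  have hh : Antitone (fun t => f (c a t) - f (c b t)) := by
    have hd : ∀ t : ℝ, HasDerivAt (fun t => f (c a t) - f (c b t))
        (fderiv ℝ f (c a t) V - fderiv ℝ f (c b t) V) t := by
      intro t
      exact ((hfd _).hasFDerivAt.comp_hasDerivAt t (hc_t a t)).sub
        ((hfd _).hasFDerivAt.comp_hasDerivAt t (hc_t b t))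
    apply antitone_of_deriv_nonpos
    · exact fun t => (hd t).differentiableAt
    · intro t
      rw [(hd t).deriv]
      have := hq t hab.le
      simpa using this
  have hmain := hh hab.le
  -- identify the points
  have hcab : c a b = Function.update (fun _ => b) i0 a := by
    funext i
    by_cases h : i = i0 <;> simp [hc, hE, hV, h, Function.update_apply, Pi.single_apply]
  have hcba : c b a = Function.update (fun _ => a) i0 b := by
    funext i
    by_cases h : i = i0 <;> simp [hc, hE, hV, h, Function.update_apply, Pi.single_apply]
  have hcaa : c a a = fun _ => a := by
    funext i
    by_cases h : i = i0 <;> simp [hc, hE, hV, h, Pi.single_apply]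
  have hcbb : c b b = fun _ => b := by
    funext i
    by_cases h : i = i0 <;> simp [hc, hE, hV, h, Pi.single_apply]
  have hmain' : f (c a a) - f (c b a) ≤ f (c a b) - f (c b b) := hmain
  rw [hcab, hcaa, hcbb, hcba] at hmain'
  linarith
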